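/- Under the kernel setup, the pair (h⋆, r⋆) given by h⋆(x) = m(x) and r⋆(x) = c(x) − V(x) satisfies R(h⋆, r⋆) = ∫ min(c(x), V(x)) ∂μ(x); hence, combined with the lower bound R(h,r) ≥ ∫ min(c(x), V(x)) ∂μ(x), the pair (h⋆, r⋆) minimizes the RcR risk (the optimal model predicts the conditional mean and rejects exactly when the conditional variance V(x) exceeds the cost c(x)). -/

import Mathlib

open MeasureTheory ProbabilityTheory

lemma sq_integral_eq (ν : Measure ℝ) [IsProbabilityMeasure ν]
    (h2 : Integrable (fun y => y ^ 2) ν) (a : ℝ) :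
    ∫ y, (a - y) ^ 2 ∂ν = (∫ y, (y - (∫ y, y ∂ν)) ^ 2 ∂ν) + (a - ∫ y, y ∂ν) ^ 2 := by
  have hy : Integrable (fun y => y) ν := by
    refine Integrable.mono' ((integrable_const 1).add h2)
      measurable_id.aestronglyMeasurable (ae_of_all _ fun y => ?_)
    simp only [Pi.add_apply, Real.norm_eq_abs]
    nlinarith [sq_nonneg (|y| - 1), sq_abs y]
  have e1 : ∀ b : ℝ, ∫ y, (b - y) ^ 2 ∂ν = b ^ 2 - 2 * b * (∫ y, y ∂ν) + ∫ y, y ^ 2 ∂ν := by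
    intro b
    have i1 : Integrable (fun y : ℝ => b ^ 2 + -(2 * b) * y) ν :=
      (integrable_const _).add (hy.const_mul _)
    have A : ∫ y, (b - y) ^ 2 ∂ν = ∫ y, ((b ^ 2 + -(2 * b) * y) + y ^ 2) ∂ν := by
      congr 1; funext y; ring
    rw [A, integral_add i1 h2,
      integral_add (integrable_const (b ^ 2)) (hy.const_mul (-(2 * b))),
      integral_const, integral_const_mul]
    simp [measure_univ]
    ring
  have e2 : ∫ y, (y - (∫ y, y ∂ν)) ^ 2 ∂ν = ∫ y, ((∫ y, y ∂ν) - y) ^ 2 ∂ν := by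
    congr 1; funext y; ring
  rw [e1, e2, e1]
  ring

/-- Attainment half of Theorem 1 (Bayes optimal solution for regression with cost-based
rejection): under the kernel setup, the pair `(h⋆, r⋆)` given by `h⋆ x = m x` and
`r⋆ x = c x − V x` satisfies `R(h⋆, r⋆) = ∫ min (c x) (V x) ∂μ`; hence, combined with the
lower bound, `(h⋆, r⋆)` minimizes the RcR risk. -/
theorem rcr_bayes_optimal_pair {X : Type*} [MeasurableSpace X]
    (μ : Measure X) [IsProbabilityMeasure μ]
    (κ : Kernel X ℝ) [IsMarkovKernel κ]
    (hκ : ∀ᵐ x ∂μ, Integrable (fun y => y ^ 2) (κ x))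
    (m V : X → ℝ)
    (hm : ∀ x, m x = ∫ y, y ∂(κ x))
    (hV : ∀ x, V x = ∫ y, (y - m x) ^ 2 ∂(κ x))
    (hVint : Integrable V μ)
    (c : X → ℝ) (hc_meas : Measurable c) (hc_nonneg : ∀ x, 0 ≤ c x)
    (hc_int : Integrable c μ) :
    (∫ x, (if 0 < c x - V x then ∫ y, (m x - y) ^ 2 ∂(κ x) else c x) ∂μ
        = ∫ x, min (c x) (V x) ∂μ) ∧
    (∀ h r : X → ℝ, Measurable h → Measurable r →
      Integrable (fun x => ∫ y, (h x - y) ^ 2 ∂(κ x)) μ →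
      ∫ x, (if 0 < c x - V x then ∫ y, (m x - y) ^ 2 ∂(κ x) else c x) ∂μ ≤
        ∫ x, (if 0 < r x then ∫ y, (h x - y) ^ 2 ∂(κ x) else c x) ∂μ) := by
  have hmv : ∀ x, ∫ y, (m x - y) ^ 2 ∂(κ x) = V x := by
    intro x
    rw [hV x]
    congr 1; funext y; ring
  have hpt : ∀ x, (if 0 < c x - V x then ∫ y, (m x - y) ^ 2 ∂(κ x) else c x)
      = min (c x) (V x) := by
    intro x
    rw [hmv x]
    split_ifs with hx
    · rw [min_eq_right]; linarith
    · rw [min_eq_left]; linarith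
  have part1 : ∫ x, (if 0 < c x - V x then ∫ y, (m x - y) ^ 2 ∂(κ x) else c x) ∂μ
      = ∫ x, min (c x) (V x) ∂μ := integral_congr_ae (ae_of_all _ hpt)
  refine ⟨part1, fun h r hh hr hG => ?_⟩
  rw [part1]
  have hmin_int : Integrable (fun x => min (c x) (V x)) μ := by
    have := hc_int.inf hVint
    exact this
  have hs : MeasurableSet {x | 0 < r x} := measurableSet_lt measurable_const hr
  have hRint : Integrable
      (fun x => if 0 < r x then ∫ y, (h x - y) ^ 2 ∂(κ x) else c x) μ := by
    have := Integrable.piecewise (f := fun x => ∫ y, (h x - y) ^ 2 ∂(κ x)) (g := c)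
      hs hG.integrableOn hc_int.integrableOn
    refine this.congr (ae_of_all _ fun x => ?_)
    simp [Set.piecewise]
  refine integral_mono_ae hmin_int hRint ?_
  filter_upwards [hκ] with x hx2
  split_ifs with hrx
  · have key : ∫ y, (h x - y) ^ 2 ∂(κ x)
        = (∫ y, (y - (∫ y, y ∂(κ x))) ^ 2 ∂(κ x)) + (h x - ∫ y, y ∂(κ x)) ^ 2 :=
      sq_integral_eq (κ x) hx2 (h x)
    have hVx : V x = ∫ y, (y - (∫ y, y ∂(κ x))) ^ 2 ∂(κ x) := by
      rw [hV x, hm x]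
    have h1 : min (c x) (V x) ≤ V x := min_le_right _ _
    nlinarith [sq_nonneg (h x - ∫ y, y ∂(κ x))]
  · exact min_le_left _ _
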